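/- Fix ε ∈ [0,1], N ≥ 1, and values I_{s,t} ∈ {0,1}, W_t ∈ {−1,0,1} for t ∈ [N]. Define T_j = Σ_{t=1}^N (I_{s,t} − ε) + Σ_{t=1}^{j−1} W_t + (1 − ε). Suppose the set {j ∈ [N] : T_j ≤ 0} is nonempty with maximum ĵ, and ĵ < N. Then −1 < T_{ĵ} ≤ 0; consequently, writing R̂⁺ = (T_{ĵ} + (N+1)ε)/(N+1) for the bumped empirical risk at the selected threshold, one has ε − 1/(N+1) < R̂⁺ ≤ ε. -/

import Mathlib

open Finset

/-- Tightness of the selected CRC threshold: if `ĵ = max{j ∈ [N] : T_j ≤ 0}` exists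
and `ĵ < N`, then `−1 < T_ĵ ≤ 0`; consequently the bumped empirical risk
`R̂⁺ = (T_ĵ + (N+1)ε)/(N+1)` satisfies `ε − 1/(N+1) < R̂⁺ ≤ ε`. -/
theorem stmt15 (N : ℕ) (hN : 1 ≤ N) (ε : ℝ) (hε : ε ∈ Set.Icc (0:ℝ) 1)
    (Is : ℕ → ℝ) (hIs : ∀ t, Is t = 0 ∨ Is t = 1)
    (W : ℕ → ℝ) (hW : ∀ t, W t = -1 ∨ W t = 0 ∨ W t = 1)
    (T : ℕ → ℝ)
    (hT : ∀ j, T j = (∑ t ∈ Finset.Icc 1 N, (Is t - ε))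
        + (∑ t ∈ Finset.Icc 1 (j - 1), W t) + (1 - ε))
    (jhat : ℕ)
    (hjhat_mem : jhat ∈ Finset.Icc 1 N) (hjhat_le : T jhat ≤ 0)
    (hjhat_max : ∀ j ∈ Finset.Icc 1 N, T j ≤ 0 → j ≤ jhat)
    (hjhatN : jhat < N)
    (Rplus : ℝ) (hRplus : Rplus = (T jhat + ((N : ℝ) + 1) * ε) / ((N : ℝ) + 1)) :
    (-1 < T jhat ∧ T jhat ≤ 0) ∧ (ε - 1 / ((N : ℝ) + 1) < Rplus ∧ Rplus ≤ ε) := by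

  obtain ⟨hj1, hjN⟩ := Finset.mem_Icc.mp hjhat_mem
  have hsucc : jhat + 1 ∈ Finset.Icc 1 N := Finset.mem_Icc.mpr ⟨by omega, by omega⟩
  have hTpos : 0 < T (jhat + 1) := by
    by_contra h
    push_neg at h
    have := hjhat_max (jhat + 1) hsucc h
    omega
  have hdiff : T (jhat + 1) = T jhat + W jhat := by
    rw [hT, hT]
    have h1 : jhat + 1 - 1 = (jhat - 1) + 1 := by omega
    rw [h1, Finset.sum_Icc_succ_top (by omega : 1 ≤ jhat - 1 + 1)]
    have h2 : jhat - 1 + 1 = jhat := by omega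
    rw [h2]; ring
  have hW1 : W jhat ≤ 1 := by rcases hW jhat with h|h|h <;> simp [h] <;> norm_num
  have hTgt : -1 < T jhat := by
    have : T jhat + W jhat > 0 := hdiff ▸ hTpos
    linarith
  have hNpos : (0:ℝ) < (N:ℝ) + 1 := by positivity
  refine ⟨⟨hTgt, hjhat_le⟩, ?_, ?_⟩
  · rw [hRplus, sub_lt_iff_lt_add, ← add_div, lt_div_iff₀ hNpos]
    nlinarith
  · rw [hRplus, div_le_iff₀ hNpos]
    nlinarith
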